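/- arXiv:math/0311434 — 2 statements merged into one kernel-verified Lean document; each statement's English description precedes it below -/
import Mathlib

section
/- Let K be a finite extension of ℚ_p, n > 1 a natural number, and k > v(n). Setting k' = k + v(n), the map x ↦ x^n is a bijection from K^(k) onto P_n^(k'), where for a set X ⊆ K, X^(k) = {x ∈ X : x ≠ 0 and v(π^{-v(x)}·x − 1) ≥ k} and P_n = {x ∈ K× : ∃ y ∈ K, y^n = x}. -/
/-- A normalized discrete valuation (with values in `WithTop ℤ`) on a finite extension `K`
of `ℚ_p`, compatible with the `p`-adic valuation up to a ramification index. -/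
structure PadicStructure (p : ℕ) [Fact p.Prime] (K : Type*) [Field K] [Algebra ℚ_[p] K]
    [FiniteDimensional ℚ_[p] K] where
  v : K → WithTop ℤ
  v_zero : v 0 = ⊤
  v_ne_top : ∀ {x : K}, x ≠ 0 → v x ≠ ⊤
  v_mul : ∀ x y : K, v (x * y) = v x + v y
  v_add : ∀ x y : K, min (v x) (v y) ≤ v (x + y)
  ramification : ∃ e : ℕ, 0 < e ∧
    ∀ x : ℚ_[p], x ≠ 0 → v (algebraMap ℚ_[p] K x) = (((e : ℤ) * x.valuation : ℤ) : WithTop ℤ)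

namespace PadicStructure

variable {p : ℕ} [Fact p.Prime] {K : Type*} [Field K] [Algebra ℚ_[p] K]
  [FiniteDimensional ℚ_[p] K] (V : PadicStructure p K)

/-- The valuation ring `R = {x : v x ≥ 0}`. -/
def R : Set K := {x | 0 ≤ V.v x}

/-- `P n`, the set of nonzero `n`-th powers of `K`. -/
def P (_W : PadicStructure p K) (n : ℕ) : Set K := {x | x ≠ 0 ∧ ∃ y : K, y ^ n = x}

/-- `X^(k)`: elements `x ≠ 0` of `X` with `v (π ^ (-v x) * x - 1) ≥ k`. -/
def shift (π : K) (X : Set K) (k : ℕ) : Set K :=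
  {x | x ∈ X ∧ x ≠ 0 ∧ ∀ s : ℤ, V.v x = (s : WithTop ℤ) →
    ((k : ℤ) : WithTop ℤ) ≤ V.v (π ^ (-s) * x - 1)}

/-- `K^(k)`. -/
def Kshift (π : K) (k : ℕ) : Set K := V.shift π Set.univ k

end PadicStructure

/-- Semi-algebraic subsets of `K^m`: Boolean combinations of sets `{x : f x ∈ P n}`. -/
inductive IsSA (K : Type*) [Field K] : {m : ℕ} → Set (Fin m → K) → Prop
  | basic {m : ℕ} (f : MvPolynomial (Fin m) K) (n : ℕ) (hn : 0 < n) :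
      IsSA K {x | MvPolynomial.eval x f ≠ 0 ∧ ∃ y : K, y ^ n = MvPolynomial.eval x f}
  | compl {m : ℕ} {A : Set (Fin m → K)} : IsSA K A → IsSA K Aᶜ
  | union {m : ℕ} {A B : Set (Fin m → K)} : IsSA K A → IsSA K B → IsSA K (A ∪ B)

/-- A semi-algebraic bijection (isomorphism) between `X ⊆ K^n` and `Y ⊆ K^m`:
a bijection whose graph is semi-algebraic. -/
def SAIso (K : Type*) [Field K] {n m : ℕ} (X : Set (Fin n → K)) (Y : Set (Fin m → K)) : Prop :=
  ∃ f : (Fin n → K) → (Fin m → K), Set.BijOn f X Y ∧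
    IsSA K {z : Fin (n + m) → K |
      (fun i => z (Fin.castAdd m i)) ∈ X ∧
      f (fun i => z (Fin.castAdd m i)) = fun j => z (Fin.natAdd n j)}


namespace PadicStructure

variable {p : ℕ} [Fact p.Prime] {K : Type*} [Field K] [Algebra ℚ_[p] K]
  [FiniteDimensional ℚ_[p] K] (V : PadicStructure p K)

lemma aux_ne_zero {x : K} {s : ℤ} (h : V.v x = (s : WithTop ℤ)) : x ≠ 0 := by
  intro h0; rw [h0, V.v_zero] at h; exact (WithTop.top_ne_coe) h

lemma aux_exists {x : K} (h : x ≠ 0) : ∃ s : ℤ, V.v x = (s : WithTop ℤ) := by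
  obtain ⟨s, hs⟩ := WithTop.ne_top_iff_exists.mp (V.v_ne_top h)
  exact ⟨s, hs.symm⟩

lemma v_one : V.v 1 = 0 := by
  obtain ⟨s, hs⟩ := V.aux_exists (one_ne_zero (α := K))
  have h := V.v_mul 1 1
  rw [one_mul, hs] at h
  have : s = s + s := by exact_mod_cast h
  have : s = 0 := by omega
  rw [hs, this]; rfl

lemma v_neg (x : K) : V.v (-x) = V.v x := by
  have hm : V.v (-1 : K) = 0 := by
    obtain ⟨s, hs⟩ := V.aux_exists (neg_ne_zero.mpr (one_ne_zero (α := K)))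
    have h := V.v_mul (-1) (-1)
    rw [neg_mul_neg, one_mul, V.v_one, hs] at h
    have : (0 : ℤ) = s + s := by exact_mod_cast h
    have : s = 0 := by omega
    rw [hs, this]; rfl
  calc V.v (-x) = V.v ((-1) * x) := by ring_nf
  _ = V.v x := by rw [V.v_mul, hm, zero_add]

lemma v_sub_le (x y : K) : min (V.v x) (V.v y) ≤ V.v (x - y) := by
  have := V.v_add x (-y)
  rw [V.v_neg y] at this
  simpa [sub_eq_add_neg] using this

lemma v_pow (x : K) (m : ℕ) : V.v (x ^ m) = m • V.v x := by
  induction m with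
  | zero => simpa using V.v_one
  | succ m ih => rw [pow_succ, V.v_mul, ih, succ_nsmul]

lemma v_pow_int {x : K} {s : ℤ} (h : V.v x = (s : WithTop ℤ)) (m : ℕ) :
    V.v (x ^ m) = ((m * s : ℤ) : WithTop ℤ) := by
  rw [V.v_pow, h]
  induction m with
  | zero => simp
  | succ m ih =>
    rw [succ_nsmul, ih, ← WithTop.coe_add]
    congr 1
    push_cast
    ring

lemma v_inv {x : K} {s : ℤ} (h : V.v x = (s : WithTop ℤ)) :
    V.v x⁻¹ = ((-s : ℤ) : WithTop ℤ) := by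
  have hx : x ≠ 0 := V.aux_ne_zero h
  obtain ⟨t, ht⟩ := V.aux_exists (inv_ne_zero hx)
  have hm := V.v_mul x x⁻¹
  rw [mul_inv_cancel₀ hx, V.v_one, h, ht] at hm
  have : (0 : ℤ) = s + t := by exact_mod_cast hm
  have : t = -s := by omega
  rw [ht, this]

lemma v_zpow {π : K} (hπ : V.v π = ((1 : ℤ) : WithTop ℤ)) (m : ℤ) :
    V.v (π ^ m) = (m : WithTop ℤ) := by
  rcases m with m | m
  · rw [Int.ofNat_eq_coe, zpow_natCast, V.v_pow_int hπ]
    congr 1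
    ring
  · have h1 : V.v (π ^ (m + 1 : ℕ)) = (((m + 1 : ℕ) : ℤ) : WithTop ℤ) := by
      rw [V.v_pow_int hπ]
      congr 1
      ring
    rw [Int.negSucc_eq, show (-((m : ℤ) + 1)) = -((m + 1 : ℕ) : ℤ) by push_cast; ring,
      zpow_neg, zpow_natCast, V.v_inv h1]

include V in
lemma charZeroK : CharZero K :=
  charZero_of_injective_algebraMap (algebraMap ℚ_[p] K).injective

lemma v_natCast {m : ℕ} (hm : m ≠ 0) : 0 ≤ V.v (m : K) := by
  obtain ⟨e, he, hram⟩ := V.ramification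
  have h0 : ((m : ℚ_[p])) ≠ 0 := Nat.cast_ne_zero.mpr hm
  have := hram (m : ℚ_[p]) h0
  rw [map_natCast] at this
  rw [this]
  have hval : (0 : ℤ) ≤ (e : ℤ) * ((m : ℚ_[p]).valuation) := by
    rw [Padic.valuation_natCast]
    positivity
  exact_mod_cast hval

lemma le_v_mul {x y : K} {a b : ℤ} (hx : (a : WithTop ℤ) ≤ V.v x) (hy : (b : WithTop ℤ) ≤ V.v y) :
    ((a + b : ℤ) : WithTop ℤ) ≤ V.v (x * y) := by
  rw [V.v_mul, WithTop.coe_add]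
  exact add_le_add hx hy

lemma le_v_mul' {x y : K} {a : ℤ} (hx : (a : WithTop ℤ) ≤ V.v x) (hy : (0 : WithTop ℤ) ≤ V.v y) :
    (a : WithTop ℤ) ≤ V.v (x * y) := by
  have : ((a + 0 : ℤ) : WithTop ℤ) ≤ V.v (x * y) := V.le_v_mul hx (by exact_mod_cast hy)
  simpa using this

lemma le_v_add {x y : K} {a : ℤ} (hx : (a : WithTop ℤ) ≤ V.v x) (hy : (a : WithTop ℤ) ≤ V.v y) :
    (a : WithTop ℤ) ≤ V.v (x + y) :=
  le_trans (le_min hx hy) (V.v_add x y)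

lemma le_v_sub {x y : K} {a : ℤ} (hx : (a : WithTop ℤ) ≤ V.v x) (hy : (a : WithTop ℤ) ≤ V.v y) :
    (a : WithTop ℤ) ≤ V.v (x - y) :=
  le_trans (le_min hx hy) (V.v_sub_le x y)

/-- The key binomial identity: `(1+t)^n = 1 + t*(n + t*B)` with `v B ≥ 0` when `v t ≥ 0`. -/
lemma key_identity (n : ℕ) (hn : 1 ≤ n) (t : K) (ht : (0 : WithTop ℤ) ≤ V.v t) :
    ∃ B : K, (1 + t) ^ n = 1 + t * ((n : K) + t * B) ∧ (0 : WithTop ℤ) ≤ V.v B := by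
  induction n with
  | zero => omega
  | succ n ih =>
    rcases Nat.eq_or_lt_of_le hn with h1 | h1
    · refine ⟨0, by rw [← h1]; push_cast; ring, by rw [V.v_zero]; exact le_top⟩
    · obtain ⟨B, hB, hvB⟩ := ih (by omega)
      refine ⟨B + (n : K) + t * B, ?_, ?_⟩
      · rw [pow_succ, hB]; push_cast; ring
      · have h0 : (0:ℤ) = ((0:ℤ) + (0:ℤ)) := by ring
        refine V.le_v_add (a := 0) (V.le_v_add (a := 0) hvB ?_) ?_
        · exact V.v_natCast (by omega)
        · have := V.le_v_mul (a := 0) (b := 0) ht hvB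
          simpa using this

/-- If `v (x - 1) ≥ k ≥ 1` then `v x = 0`. -/
lemma v_eq_zero_of_near_one {x : K} {k : ℕ} (hk : 1 ≤ k)
    (h : ((k : ℤ) : WithTop ℤ) ≤ V.v (x - 1)) : V.v x = 0 := by
  have h1 : (0 : WithTop ℤ) ≤ V.v (x - 1) := by
    refine le_trans ?_ h
    exact_mod_cast WithTop.coe_le_coe.mpr (by exact_mod_cast Nat.zero_le k)
  have hx0 : (0 : WithTop ℤ) ≤ V.v x := by
    have : x = (x - 1) + 1 := by ring
    rw [this]
    refine le_trans (le_min h1 (le_of_eq V.v_one.symm)) (V.v_add _ _)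
  -- now show v x ≤ 0 : 1 = x - (x - 1)
  by_contra hne
  have hxpos : 0 < V.v x := lt_of_le_of_ne hx0 (fun h' => hne h'.symm)
  have hpos1 : 0 < V.v (x - 1) := by
    refine lt_of_lt_of_le ?_ h
    exact_mod_cast WithTop.coe_lt_coe.mpr (by exact_mod_cast hk)
  have hlt : (0 : WithTop ℤ) < V.v 1 := by
    have h1eq : (1 : K) = x - (x - 1) := by ring
    rw [h1eq]
    exact lt_of_lt_of_le (lt_min hxpos hpos1) (V.v_sub_le _ _)
  rw [V.v_one] at hlt
  exact absurd hlt (lt_irrefl 0)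

section Norm

variable (e : ℕ)

open Classical in
/-- The real absolute value associated to `V`, normalized to extend the `p`-adic norm. -/
noncomputable def vnorm (x : K) : ℝ :=
  if h : x = 0 then 0 else (p : ℝ) ^ (-(((V.v x).untop (V.v_ne_top h) : ℤ) : ℝ) / (e : ℝ))

lemma one_lt_p (_V : PadicStructure p K) : (1 : ℝ) < (p : ℝ) :=
  Nat.one_lt_cast.mpr (Fact.out (p := p.Prime)).one_lt

lemma vnorm_zero : V.vnorm e (0 : K) = 0 := dif_pos rfl

lemma vnorm_eq {x : K} {s : ℤ} (hs : V.v x = (s : WithTop ℤ)) :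
    V.vnorm e x = (p : ℝ) ^ (-(s : ℝ) / (e : ℝ)) := by
  have hx : x ≠ 0 := V.aux_ne_zero hs
  rw [vnorm]
  rw [dif_neg hx]
  have h2 : (((V.v x).untop (V.v_ne_top hx) : ℤ) : WithTop ℤ) = (s : WithTop ℤ) := by
    rw [WithTop.coe_untop, hs]
  rw [WithTop.coe_inj.mp h2]

lemma vnorm_nonneg (x : K) : 0 ≤ V.vnorm e x := by
  by_cases hx : x = 0
  · rw [hx, vnorm_zero]
  · obtain ⟨s, hs⟩ := V.aux_exists hx
    rw [V.vnorm_eq e hs]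
    positivity

lemma vnorm_pos {x : K} (hx : x ≠ 0) : 0 < V.vnorm e x := by
  have hp : (0 : ℝ) < (p : ℝ) := lt_trans one_pos (V.one_lt_p)
  obtain ⟨s, hs⟩ := V.aux_exists hx
  rw [V.vnorm_eq e hs]
  positivity

lemma vnorm_le_iff (he : 0 < e) {x : K} {m : ℤ} :
    V.vnorm e x ≤ (p : ℝ) ^ (-(m : ℝ) / (e : ℝ)) ↔ ((m : ℤ) : WithTop ℤ) ≤ V.v x := by
  have hp : (1 : ℝ) < (p : ℝ) := V.one_lt_p
  by_cases hx : x = 0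
  · simp only [hx, V.vnorm_zero e, V.v_zero, le_top, iff_true]
    positivity
  · obtain ⟨s, hs⟩ := V.aux_exists hx
    rw [V.vnorm_eq e hs, hs, Real.rpow_le_rpow_left_iff hp, WithTop.coe_le_coe,
      div_le_div_iff_of_pos_right (by exact_mod_cast he), neg_le_neg_iff, Int.cast_le]

lemma vnorm_mul (x y : K) : V.vnorm e (x * y) = V.vnorm e x * V.vnorm e y := by
  by_cases hx : x = 0
  · simp [hx, V.vnorm_zero e]
  by_cases hy : y = 0
  · simp [hy, V.vnorm_zero e]
  obtain ⟨s, hs⟩ := V.aux_exists hx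
  obtain ⟨t, ht⟩ := V.aux_exists hy
  have hxy : V.v (x * y) = ((s + t : ℤ) : WithTop ℤ) := by
    rw [V.v_mul, hs, ht]; push_cast; ring
  have hp : (0 : ℝ) < (p : ℝ) := lt_trans one_pos (V.one_lt_p)
  rw [V.vnorm_eq e hs, V.vnorm_eq e ht, V.vnorm_eq e hxy, ← Real.rpow_add hp]
  congr 1
  push_cast
  ring

lemma vnorm_mono {x y : K} (h : V.v y ≤ V.v x) : V.vnorm e x ≤ V.vnorm e y := by
  have hp : (1 : ℝ) < (p : ℝ) := V.one_lt_p
  by_cases hx : x = 0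
  · rw [hx, V.vnorm_zero e]; exact V.vnorm_nonneg e y
  · obtain ⟨s, hs⟩ := V.aux_exists hx
    by_cases hy : y = 0
    · rw [hy, V.v_zero, top_le_iff, hs] at h
      exact absurd h (WithTop.coe_ne_top)
    · obtain ⟨t, ht⟩ := V.aux_exists hy
      rw [hs, ht, WithTop.coe_le_coe] at h
      rw [V.vnorm_eq e hs, V.vnorm_eq e ht, Real.rpow_le_rpow_left_iff hp]
      have h' : (t : ℝ) ≤ (s : ℝ) := by exact_mod_cast h
      have he' : (0 : ℝ) ≤ (e : ℝ)⁻¹ := by positivity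
      rw [div_eq_mul_inv, div_eq_mul_inv]
      nlinarith

lemma vnorm_add_le (x y : K) :
    V.vnorm e (x + y) ≤ max (V.vnorm e x) (V.vnorm e y) := by
  rcases le_total (V.v x) (V.v y) with h | h
  · have : V.v x ≤ V.v (x + y) := le_trans (le_of_eq (min_eq_left h).symm) (V.v_add x y)
    exact le_trans (V.vnorm_mono e this) (le_max_left _ _)
  · have : V.v y ≤ V.v (x + y) := le_trans (le_of_eq (min_eq_right h).symm) (V.v_add x y)
    exact le_trans (V.vnorm_mono e this) (le_max_right _ _)

lemma vnorm_neg (x : K) : V.vnorm e (-x) = V.vnorm e x := by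
  by_cases hx : x = 0
  · simp [hx]
  · obtain ⟨s, hs⟩ := V.aux_exists hx
    have hs' : V.v (-x) = (s : WithTop ℤ) := by rw [V.v_neg, hs]
    rw [V.vnorm_eq e hs, V.vnorm_eq e hs']

/-- The normed field structure on `K` induced by `V`. -/
@[reducible]
noncomputable def normedFieldAux : NormedField K where
  norm := V.vnorm e
  dist x y := V.vnorm e (x - y)
  dist_self x := by simp [V.vnorm_zero e]
  dist_comm x y := by
    show V.vnorm e (x - y) = V.vnorm e (y - x)
    rw [← neg_sub, V.vnorm_neg]
  dist_triangle x y z := by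
    show V.vnorm e (x - z) ≤ V.vnorm e (x - y) + V.vnorm e (y - z)
    have h : x - z = (x - y) + (y - z) := by ring
    rw [h]
    refine le_trans (V.vnorm_add_le e _ _) ?_
    exact max_le (le_add_of_nonneg_right (V.vnorm_nonneg e _))
      (le_add_of_nonneg_left (V.vnorm_nonneg e _))
  eq_of_dist_eq_zero {x y} h := by
    by_contra hne
    exact absurd h (ne_of_gt (V.vnorm_pos e (sub_ne_zero_of_ne hne)))
  dist_eq x y := by
    show V.vnorm e (x - y) = V.vnorm e (-x + y)
    rw [← V.vnorm_neg e (x - y), neg_sub, sub_eq_neg_add]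
  norm_mul := V.vnorm_mul e

lemma vnorm_algebraMap (he : 0 < e)
    (hram : ∀ x : ℚ_[p], x ≠ 0 →
      V.v (algebraMap ℚ_[p] K x) = (((e : ℤ) * x.valuation : ℤ) : WithTop ℤ)) (c : ℚ_[p]) :
    V.vnorm e (algebraMap ℚ_[p] K c) = ‖c‖ := by
  by_cases hc : c = 0
  · simp [hc, V.vnorm_zero e]
  · rw [V.vnorm_eq e (hram c hc), Padic.norm_eq_zpow_neg_valuation hc]
    rw [← Real.rpow_intCast ((p : ℝ)) (-c.valuation)]
    congr 1
    have he' : (e : ℝ) ≠ 0 := by positivity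
    push_cast
    field_simp

end Norm

/-- Hensel-style lifting: any `u` with `v (u - 1) ≥ k + vn` is the `n`-th power of
some `a` with `v (a - 1) ≥ k`. -/
lemma hensel_aux (n : ℕ) (hn : 1 < n)
    (vn : ℕ) (hvn : V.v (n : K) = ((vn : ℤ) : WithTop ℤ))
    (k : ℕ) (hk : vn < k) (u : K)
    (hu : (((k + vn : ℕ) : ℤ) : WithTop ℤ) ≤ V.v (u - 1)) :
    ∃ a : K, a ^ n = u ∧ (((k : ℕ) : ℤ) : WithTop ℤ) ≤ V.v (a - 1) := by
  haveI : CharZero K := V.charZeroK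
  obtain ⟨e, he, hram⟩ := V.ramification
  have hk1 : 1 ≤ k := by omega
  have hnn : (n : K) ≠ 0 := Nat.cast_ne_zero.mpr (by omega)
  -- the Newton iteration
  set F : K → K := fun g => g - (g ^ n - u) / ((n : K) * g ^ (n - 1)) with hF
  set seq : ℕ → K := fun m => F^[m] 1 with hseq
  have hseq0 : seq 0 = 1 := rfl
  have hseqS : ∀ m, seq (m + 1) = F (seq m) := fun m => Function.iterate_succ_apply' F m 1
  -- the invariant
  have step : ∀ g : K, ∀ m : ℕ,
      (((k : ℕ) : ℤ) : WithTop ℤ) ≤ V.v (g - 1) →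
      (((k + vn + m : ℕ) : ℤ) : WithTop ℤ) ≤ V.v (g ^ n - u) →
      ((((k : ℕ) : ℤ) : WithTop ℤ) ≤ V.v (F g - 1) ∧
       (((k + vn + (m + 1) : ℕ) : ℤ) : WithTop ℤ) ≤ V.v (F g ^ n - u)) ∧
      (((k + m : ℕ) : ℤ) : WithTop ℤ) ≤ V.v (F g - g) := by
    intro g m hg1 hg2
    have hvg : V.v g = ((0 : ℤ) : WithTop ℤ) := by
      exact_mod_cast V.v_eq_zero_of_near_one hk1 hg1
    have hg0 : g ≠ 0 := V.aux_ne_zero hvg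
    have hden : (n : K) * g ^ (n - 1) ≠ 0 := mul_ne_zero hnn (pow_ne_zero _ hg0)
    have hvden : V.v ((n : K) * g ^ (n - 1)) = ((vn : ℤ) : WithTop ℤ) := by
      rw [V.v_mul, hvn, V.v_pow_int hvg]
      norm_num
    by_cases hgu : g ^ n - u = 0
    · have hFg : F g = g := by rw [hF]; simp [hgu]
      refine ⟨⟨by rwa [hFg], ?_⟩, ?_⟩
      · rw [hFg, hgu, V.v_zero]; exact le_top
      · rw [hFg, sub_self, V.v_zero]; exact le_top
    · obtain ⟨s₂, hs₂⟩ := V.aux_exists hgu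
      have hs₂ge : ((k : ℤ) + vn + m) ≤ s₂ := by
        have := hu  -- dummy
        rw [hs₂] at hg2
        exact_mod_cast hg2
      set h : K := (g ^ n - u) / ((n : K) * g ^ (n - 1)) with hh
      have hFgh : F g = g - h := rfl
      have hvh : V.v h = ((s₂ - vn : ℤ) : WithTop ℤ) := by
        rw [hh, div_eq_mul_inv, V.v_mul, hs₂, V.v_inv hvden, ← WithTop.coe_add]
        congr 1
      have hvFg1 : (((k : ℕ) : ℤ) : WithTop ℤ) ≤ V.v (F g - 1) := by
        have : F g - 1 = (g - 1) - h := by rw [hFgh]; ring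
        rw [this]
        refine V.le_v_sub hg1 ?_
        rw [hvh, WithTop.coe_le_coe]
        omega
      refine ⟨⟨hvFg1, ?_⟩, ?_⟩
      · -- main estimate
        set t : K := -(h / g) with hts
        have hvt : V.v t = ((s₂ - vn : ℤ) : WithTop ℤ) := by
          rw [hts, V.v_neg, div_eq_mul_inv, V.v_mul, hvh, V.v_inv hvg, ← WithTop.coe_add]
          norm_num
        have ht0 : (0 : WithTop ℤ) ≤ V.v t := by
          rw [hvt]
          exact_mod_cast (by omega : (0 : ℤ) ≤ s₂ - vn)
        obtain ⟨B, hB, hvB⟩ := V.key_identity n (le_of_lt hn) t ht0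
        have hkey : F g ^ n - u = g ^ n * t ^ 2 * B := by
          have hgsub : g - h = g * (1 + t) := by rw [hts]; field_simp; ring
          have hdh : ((n : K) * g ^ (n - 1)) * h = g ^ n - u := by rw [hh]; field_simp
          have hgn1 : g * g ^ (n - 1) = g ^ n := by
            rw [← pow_succ']
            congr 1
            omega
          calc F g ^ n - u = (g * (1 + t)) ^ n - u := by rw [hFgh, hgsub]
            _ = g ^ n * (1 + t * ((n : K) + t * B)) - u := by rw [mul_pow, hB]
            _ = (g ^ n - u) + (g ^ n * t) * (n : K) + g ^ n * t ^ 2 * B := by ring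
            _ = g ^ n * t ^ 2 * B := by
                have hgt : g ^ n * t = -(g ^ (n - 1) * h) := by
                  rw [hts, ← hgn1]
                  field_simp
                rw [hgt]
                linear_combination -hdh
        rw [hkey]
        have h1 : ((2 * (s₂ - vn) : ℤ) : WithTop ℤ) ≤ V.v (g ^ n * t ^ 2) := by
          have hg' : V.v (g ^ n) = ((0 : ℤ) : WithTop ℤ) := by
            rw [V.v_pow_int hvg]; norm_num
          have ht' : V.v (t ^ 2) = ((2 * (s₂ - vn) : ℤ) : WithTop ℤ) := V.v_pow_int hvt 2
          rw [V.v_mul, hg', ht', ← WithTop.coe_add]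
          norm_num
        have h2 := V.le_v_mul' h1 hvB
        refine le_trans ?_ h2
        rw [WithTop.coe_le_coe]
        push_cast
        omega
      · rw [hFgh, show g - h - g = -h by ring, V.v_neg, hvh, WithTop.coe_le_coe]
        push_cast
        omega
  -- invariant for the sequence
  have inv : ∀ m : ℕ, ((((k : ℕ) : ℤ) : WithTop ℤ) ≤ V.v (seq m - 1) ∧
      (((k + vn + m : ℕ) : ℤ) : WithTop ℤ) ≤ V.v (seq m ^ n - u)) ∧
      (((k + m : ℕ) : ℤ) : WithTop ℤ) ≤ V.v (seq (m + 1) - seq m) := by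
    intro m
    induction m with
    | zero =>
      have h1 : (((k : ℕ) : ℤ) : WithTop ℤ) ≤ V.v (seq 0 - 1) := by
        rw [hseq0, sub_self, V.v_zero]; exact le_top
      have h2 : (((k + vn + 0 : ℕ) : ℤ) : WithTop ℤ) ≤ V.v (seq 0 ^ n - u) := by
        rw [hseq0, one_pow, show (1 : K) - u = -(u - 1) by ring, V.v_neg]
        simpa using hu
      exact ⟨⟨h1, h2⟩, by rw [hseqS 0]; exact (step (seq 0) 0 h1 h2).2⟩
    | succ m ih =>
      obtain ⟨⟨h1, h2⟩, _⟩ := ih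
      have := step (seq m) m h1 h2
      rw [← hseqS m] at this
      refine ⟨this.1, ?_⟩
      rw [hseqS (m + 1)]
      exact (step (seq (m + 1)) (m + 1) this.1.1 this.1.2).2
  -- convergence
  letI : NormedField K := V.normedFieldAux e
  letI : NormedSpace ℚ_[p] K := ⟨fun c x => by
    rw [Algebra.smul_def]
    show V.vnorm e (algebraMap ℚ_[p] K c * x) ≤ ‖c‖ * V.vnorm e x
    rw [V.vnorm_mul, V.vnorm_algebraMap e he hram]⟩
  haveI : CompleteSpace K := FiniteDimensional.complete ℚ_[p] K
  have hp1 : (1 : ℝ) < (p : ℝ) := V.one_lt_p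
  have hp0 : (0 : ℝ) < (p : ℝ) := lt_trans one_pos hp1
  have he0 : (0 : ℝ) < (e : ℝ) := by exact_mod_cast he
  set r : ℝ := (p : ℝ) ^ (-(1 : ℝ) / (e : ℝ)) with hr
  have hrpos : 0 < r := Real.rpow_pos_of_pos hp0 _
  have hrlt : r < 1 :=
    Real.rpow_lt_one_of_one_lt_of_neg hp1 (div_neg_of_neg_of_pos (by norm_num) he0)
  have hgeo : ∀ (j m : ℕ), (p : ℝ) ^ (-(((j + m : ℕ) : ℤ) : ℝ) / (e : ℝ)) =
      (p : ℝ) ^ (-(((j : ℕ) : ℤ) : ℝ) / (e : ℝ)) * r ^ m := by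
    intro j m
    rw [hr, ← Real.rpow_natCast ((p : ℝ) ^ (-(1 : ℝ) / (e : ℝ))) m,
      ← Real.rpow_mul (le_of_lt hp0), ← Real.rpow_add hp0]
    congr 1
    push_cast
    ring
  set C : ℝ := (p : ℝ) ^ (-(((k : ℕ) : ℤ) : ℝ) / (e : ℝ)) with hC
  have hdist : ∀ m, dist (seq m) (seq (m + 1)) ≤ C * r ^ m := by
    intro m
    have h2 : V.vnorm e (seq (m + 1) - seq m) ≤
        (p : ℝ) ^ (-(((k + m : ℕ) : ℤ) : ℝ) / (e : ℝ)) := (V.vnorm_le_iff e he).mpr (inv m).2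
    have : dist (seq m) (seq (m + 1)) = V.vnorm e (seq (m + 1) - seq m) := by
      rw [dist_comm]; rfl
    rw [this, hC, ← hgeo k m]
    exact h2
  have hcauchy : CauchySeq seq := cauchySeq_of_le_geometric r C hrlt hdist
  obtain ⟨a, ha⟩ := cauchySeq_tendsto_of_complete hcauchy
  refine ⟨a, ?_, ?_⟩
  · have h1 : Filter.Tendsto (fun m => seq m ^ n) Filter.atTop (nhds (a ^ n)) := ha.pow n
    have h2 : Filter.Tendsto (fun m => dist (seq m ^ n) u) Filter.atTop (nhds 0) := by
      have hb : ∀ m, dist (seq m ^ n) u ≤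
          ((p : ℝ) ^ (-(((k + vn : ℕ) : ℤ) : ℝ) / (e : ℝ))) * r ^ m := by
        intro m
        have h4 := (V.vnorm_le_iff e he).mpr (inv m).1.2
        have hd : dist (seq m ^ n) u = V.vnorm e (seq m ^ n - u) := rfl
        rw [hd, ← hgeo (k + vn) m]
        exact h4
      have h0 : Filter.Tendsto
          (fun m => ((p : ℝ) ^ (-(((k + vn : ℕ) : ℤ) : ℝ) / (e : ℝ))) * r ^ m)
          Filter.atTop (nhds 0) := by
        have := (tendsto_pow_atTop_nhds_zero_of_lt_one (le_of_lt hrpos) hrlt).const_mul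
          ((p : ℝ) ^ (-(((k + vn : ℕ) : ℤ) : ℝ) / (e : ℝ)))
        simpa using this
      exact squeeze_zero (fun m => dist_nonneg) hb h0
    have h5 : Filter.Tendsto (fun m => seq m ^ n) Filter.atTop (nhds u) :=
      tendsto_iff_dist_tendsto_zero.mpr h2
    exact tendsto_nhds_unique h1 h5
  · have h6 : Filter.Tendsto (fun m => ‖seq m - 1‖) Filter.atTop (nhds ‖a - 1‖) :=
      (ha.sub_const 1).norm
    have h7 : ‖a - 1‖ ≤ (p : ℝ) ^ (-(((k : ℕ) : ℤ) : ℝ) / (e : ℝ)) :=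
      le_of_tendsto h6 (Filter.Eventually.of_forall fun m =>
        (V.vnorm_le_iff e he).mpr (inv m).1.1)
    exact (V.vnorm_le_iff e he).mp h7

end PadicStructure

/-- The `n`-th power map is a bijection from `K^(k)` onto `P_n^(k + v n)`. -/
theorem pow_bijOn_shift {p : ℕ} [Fact p.Prime] {K : Type*} [Field K] [Algebra ℚ_[p] K]
    [FiniteDimensional ℚ_[p] K] (V : PadicStructure p K)
    (π : K) (hπ : V.v π = ((1 : ℤ) : WithTop ℤ))
    (n : ℕ) (hn : 1 < n)
    (vn : ℕ) (hvn : V.v (n : K) = ((vn : ℤ) : WithTop ℤ))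
    (k : ℕ) (hk : vn < k) :
    Set.BijOn (fun x : K => x ^ n) (V.Kshift π k) (V.shift π (V.P n) (k + vn)) := by
  haveI : CharZero K := V.charZeroK
  have hπ0 : π ≠ 0 := V.aux_ne_zero hπ
  have hn1 : 1 ≤ n := le_of_lt hn
  have hk1 : 1 ≤ k := by omega
  have hnK : (n : K) ≠ 0 := Nat.cast_ne_zero.mpr (by omega)
  -- main estimate in normalized coordinates
  have main_pow : ∀ t : K, (((k : ℕ) : ℤ) : WithTop ℤ) ≤ V.v t →
      (((k + vn : ℕ) : ℤ) : WithTop ℤ) ≤ V.v ((1 + t) ^ n - 1) := by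
    intro t ht
    have ht0 : (0 : WithTop ℤ) ≤ V.v t :=
      le_trans (by exact_mod_cast (by omega : (0 : ℤ) ≤ (k : ℤ))) ht
    obtain ⟨B, hB, hvB⟩ := V.key_identity n hn1 t ht0
    have hexp : (1 + t) ^ n - 1 = t * ((n : K) + t * B) := by rw [hB]; ring
    rw [hexp]
    have htB : (((vn : ℕ) : ℤ) : WithTop ℤ) ≤ V.v (t * B) := by
      refine le_trans ?_ (V.le_v_mul' ht hvB)
      exact_mod_cast (by omega : ((vn : ℕ) : ℤ) ≤ ((k : ℕ) : ℤ))
    have h2 : (((vn : ℕ) : ℤ) : WithTop ℤ) ≤ V.v ((n : K) + t * B) :=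
      V.le_v_add (le_of_eq hvn.symm) htB
    refine le_trans (le_of_eq ?_) (V.le_v_mul ht h2)
    congr 1
  refine ⟨?_, ?_, ?_⟩
  · -- MapsTo
    rintro x ⟨-, hx0, hxc⟩
    obtain ⟨s, hs⟩ := V.aux_exists hx0
    refine ⟨⟨pow_ne_zero n hx0, ⟨x, rfl⟩⟩, pow_ne_zero n hx0, ?_⟩
    intro s' hs'
    have hxn : V.v (x ^ n) = (((n : ℤ) * s : ℤ) : WithTop ℤ) := V.v_pow_int hs n
    have hs'eq : s' = (n : ℤ) * s := by
      rw [hxn] at hs'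
      exact_mod_cast hs'.symm
    subst hs'eq
    have hfact : π ^ (-((n : ℤ) * s)) * x ^ n = (π ^ (-s) * x) ^ n := by
      rw [mul_pow, ← zpow_natCast (π ^ (-s)) n, ← zpow_mul]
      congr 2
      ring
    rw [hfact, show π ^ (-s) * x = 1 + (π ^ (-s) * x - 1) by ring]
    exact main_pow _ (hxc s hs)
  · -- InjOn
    rintro x ⟨-, hx0, hxc⟩ y ⟨-, hy0, hyc⟩ heq
    have heq' : x ^ n = y ^ n := heq
    obtain ⟨s, hs⟩ := V.aux_exists hx0
    obtain ⟨s', hs'⟩ := V.aux_exists hy0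
    have hss : s = s' := by
      have h1 : V.v (x ^ n) = (((n : ℤ) * s : ℤ) : WithTop ℤ) := V.v_pow_int hs n
      have h2 : V.v (y ^ n) = (((n : ℤ) * s' : ℤ) : WithTop ℤ) := V.v_pow_int hs' n
      rw [heq', h2] at h1
      have h3 : (n : ℤ) * s' = (n : ℤ) * s := by exact_mod_cast h1
      have hn0 : (n : ℤ) ≠ 0 := by exact_mod_cast (by omega : n ≠ 0)
      exact (mul_left_cancel₀ hn0 h3).symm
    subst hss
    have ha1 := hxc s hs
    have hb1 := hyc s hs'
    set a := π ^ (-s) * x with hadef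
    set b := π ^ (-s) * y with hbdef
    have hπs : π ^ (-s) ≠ 0 := zpow_ne_zero _ hπ0
    have hvb : V.v b = ((0 : ℤ) : WithTop ℤ) := by
      exact_mod_cast V.v_eq_zero_of_near_one hk1 hb1
    have hb0 : b ≠ 0 := V.aux_ne_zero hvb
    have hab : a ^ n = b ^ n := by
      rw [hadef, hbdef, mul_pow, mul_pow, heq']
    set t : K := a * b⁻¹ - 1 with htdef
    have hvt : (((k : ℕ) : ℤ) : WithTop ℤ) ≤ V.v t := by
      have h4 : t = (a - b) * b⁻¹ := by
        rw [htdef]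
        field_simp
      have h5 : (((k : ℕ) : ℤ) : WithTop ℤ) ≤ V.v (a - b) := by
        rw [show a - b = (a - 1) - (b - 1) by ring]
        exact V.le_v_sub ha1 hb1
      have h6 : (0 : WithTop ℤ) ≤ V.v b⁻¹ := by
        rw [V.v_inv hvb]
        norm_num
      rw [h4]
      exact V.le_v_mul' h5 h6
    have ht0 : (0 : WithTop ℤ) ≤ V.v t :=
      le_trans (by exact_mod_cast (by omega : (0 : ℤ) ≤ (k : ℤ))) hvt
    obtain ⟨B, hB, hvB⟩ := V.key_identity n hn1 t ht0
    have hcn : (1 + t) ^ n = 1 := by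
      rw [show (1 : K) + t = a * b⁻¹ by rw [htdef]; ring, mul_pow, inv_pow, hab,
        mul_inv_cancel₀ (pow_ne_zero n hb0)]
    rw [hB] at hcn
    have hzero : t * ((n : K) + t * B) = 0 := by linear_combination hcn
    rcases mul_eq_zero.mp hzero with ht | hnt
    · have : a = b := by
        have : a * b⁻¹ = 1 := by
          have h9 : a * b⁻¹ - 1 = 0 := ht
          linear_combination h9
        field_simp at this
        exact this
      rw [hadef, hbdef] at this
      exact mul_left_cancel₀ hπs this
    · exfalso
      have h7 : (n : K) = -(t * B) := by linear_combination hnt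
      have h8 : (((k : ℕ) : ℤ) : WithTop ℤ) ≤ V.v ((n : K)) := by
        rw [h7, V.v_neg]
        exact V.le_v_mul' hvt hvB
      rw [hvn, WithTop.coe_le_coe] at h8
      omega
  · -- SurjOn
    rintro z ⟨⟨hz0', y, hy⟩, hz0, hzc⟩
    have hy0 : y ≠ 0 := by
      intro h
      apply hz0
      rw [← hy, h, zero_pow (by omega : n ≠ 0)]
    obtain ⟨s₀, hs₀⟩ := V.aux_exists hy0
    have hz_val : V.v z = (((n : ℤ) * s₀ : ℤ) : WithTop ℤ) := by
      rw [← hy]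
      exact V.v_pow_int hs₀ n
    have hcond := hzc ((n : ℤ) * s₀) hz_val
    obtain ⟨a, han, ha1⟩ := V.hensel_aux n hn vn hvn k hk (π ^ (-((n : ℤ) * s₀)) * z) hcond
    have hva : V.v a = ((0 : ℤ) : WithTop ℤ) := by
      exact_mod_cast V.v_eq_zero_of_near_one hk1 ha1
    have ha0 : a ≠ 0 := V.aux_ne_zero hva
    refine ⟨π ^ (s₀ : ℤ) * a, ⟨Set.mem_univ _,
      mul_ne_zero (zpow_ne_zero _ hπ0) ha0, ?_⟩, ?_⟩
    · intro s' hs'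
      have hvx : V.v (π ^ (s₀ : ℤ) * a) = ((s₀ : ℤ) : WithTop ℤ) := by
        rw [V.v_mul, V.v_zpow hπ, hva, ← WithTop.coe_add]
        norm_num
      have hs'eq : s' = s₀ := by
        rw [hvx] at hs'
        exact_mod_cast hs'.symm
      rw [hs'eq]
      have hcancel : π ^ (-s₀) * (π ^ (s₀ : ℤ) * a) = a := by
        rw [← mul_assoc, ← zpow_add₀ hπ0]
        norm_num
      rw [hcancel]
      exact ha1
    · show (π ^ (s₀ : ℤ) * a) ^ n = z
      rw [mul_pow, ← zpow_natCast (π ^ (s₀ : ℤ)) n, ← zpow_mul, han, ← mul_assoc,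
        ← zpow_add₀ hπ0, show s₀ * (n : ℤ) + -((n : ℤ) * s₀) = 0 by ring, zpow_zero, one_mul]
end

section
/- Let K be a finite extension of ℚ_p with valuation ring R and uniformizer π, m > 1, and β ∈ K^(k̄) for some k̄ > 0. Let ν_i ∈ ℤ for i = 2,…,m−1. Define D = {(x₂,…,x_m) ∈ ∏ R^(k̄) : v(β ∏_{i=2}^{m−1} x_i^{ν_i}) ≤ v(x_m)} and E = {x ∈ ∏_{i=1}^m R^(k̄) : v(β ∏_{i=2}^{m−1} x_i^{ν_i}) ≤ v(x_m) ≤ v(β x₁ ∏_{i=2}^{m−1} x_i^{ν_i})}. Then the map (x₁,…,x_m) ↦ (x₁ x_m / (β ∏_{i=2}^{m−1} x_i^{ν_i}), x₂, …, x_m) is a bijection from R^(k̄) × D onto E. -/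
section Aux
variable {p : ℕ} [Fact p.Prime] {K : Type*} [Field K] [Algebra ℚ_[p] K]
  [FiniteDimensional ℚ_[p] K] (V : PadicStructure p K)

lemma v_one' : V.v 1 = 0 := by
  have h := V.v_mul 1 1
  rw [mul_one] at h
  have hne := V.v_ne_top (one_ne_zero (α := K))
  lift V.v 1 to ℤ using hne with a
  have : a = a + a := by exact_mod_cast h
  have : a = 0 := by omega
  exact_mod_cast this

lemma v_neg' (x : K) : V.v (-x) = V.v x := by
  have h : V.v (-1 : K) = 0 := by
    have h := V.v_mul (-1 : K) (-1)
    rw [neg_mul_neg, one_mul, v_one' V] at h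
    have hne := V.v_ne_top (neg_ne_zero.mpr (one_ne_zero (α := K)))
    lift V.v (-1 : K) to ℤ using hne with a
    have : (0 : ℤ) = a + a := by exact_mod_cast h
    have : a = 0 := by omega
    exact_mod_cast this
  calc V.v (-x) = V.v ((-1) * x) := by rw [neg_one_mul]
  _ = V.v x := by rw [V.v_mul, h, zero_add]

lemma v_inv' {x : K} (hx : x ≠ 0) : V.v x + V.v x⁻¹ = 0 := by
  rw [← V.v_mul, mul_inv_cancel₀ hx, v_one' V]

end Aux
section Aux2
variable {p : ℕ} [Fact p.Prime] {K : Type*} [Field K] [Algebra ℚ_[p] K]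
  [FiniteDimensional ℚ_[p] K] (V : PadicStructure p K) {k : ℕ}

lemma v_eq_zero_of_unit (hk : 0 < k) {a : K} (ha : ((k : ℤ) : WithTop ℤ) ≤ V.v (a - 1)) : V.v a = 0 := by
  have hpos : (0 : WithTop ℤ) < V.v (a - 1) := by
    refine lt_of_lt_of_le ?_ ha
    exact_mod_cast hk
  have h1 : (0 : WithTop ℤ) ≤ V.v a := by
    have := V.v_add (a - 1) 1
    rw [sub_add_cancel] at this
    refine le_trans ?_ this
    rw [v_one' V]
    simp [le_of_lt hpos]
  have h2 : V.v a ≤ 0 := by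
    have := V.v_add a (-(a - 1))
    rw [v_neg' V] at this
    have heq : a + -(a - 1) = 1 := by ring
    rw [heq, v_one' V] at this
    by_contra hlt
    push_neg at hlt
    have : min (V.v a) (V.v (a - 1)) ≤ 0 := this
    rcases min_le_iff.mp this with h | h
    · exact absurd h (not_le.mpr hlt)
    · exact absurd h (not_le.mpr hpos)
  exact le_antisymm h2 h1

lemma unit_ne_zero (hk : 0 < k) {a : K} (ha : ((k : ℤ) : WithTop ℤ) ≤ V.v (a - 1)) : a ≠ 0 := by
  intro h
  have := v_eq_zero_of_unit V hk ha
  rw [h, V.v_zero] at this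
  exact absurd this (by simp)

lemma unit_mul (hk : 0 < k) {a b : K} (ha : ((k : ℤ) : WithTop ℤ) ≤ V.v (a - 1))
    (hb : ((k : ℤ) : WithTop ℤ) ≤ V.v (b - 1)) :
    ((k : ℤ) : WithTop ℤ) ≤ V.v (a * b - 1) := by
  have heq : a * b - 1 = a * (b - 1) + (a - 1) := by ring
  rw [heq]
  refine le_trans ?_ (V.v_add _ _)
  rw [le_min_iff, V.v_mul, v_eq_zero_of_unit V hk ha, zero_add]
  exact ⟨hb, ha⟩

lemma unit_inv (hk : 0 < k) {a : K} (ha : ((k : ℤ) : WithTop ℤ) ≤ V.v (a - 1)) :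
    ((k : ℤ) : WithTop ℤ) ≤ V.v (a⁻¹ - 1) := by
  have ha0 : a ≠ 0 := unit_ne_zero V hk ha
  have heq : a⁻¹ - 1 = a⁻¹ * (1 - a) := by field_simp
  rw [heq, V.v_mul]
  have hva : V.v a⁻¹ = 0 := by
    have := v_inv' V ha0
    rw [v_eq_zero_of_unit V hk ha, zero_add] at this
    exact this
  rw [hva, zero_add, ← v_neg' V, neg_sub]
  exact ha

end Aux2
section Aux3
variable {p : ℕ} [Fact p.Prime] {K : Type*} [Field K] [Algebra ℚ_[p] K]
  [FiniteDimensional ℚ_[p] K] (V : PadicStructure p K) {k : ℕ} {π : K}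

lemma exists_int_v {x : K} (hx : x ≠ 0) : ∃ a : ℤ, V.v x = (a : WithTop ℤ) := by
  cases h : V.v x with
  | top => exact absurd h (V.v_ne_top hx)
  | coe a => exact ⟨a, rfl⟩

lemma pi_ne_zero (hπ : V.v π = ((1 : ℤ) : WithTop ℤ)) : π ≠ 0 := by
  intro h
  rw [h, V.v_zero] at hπ
  exact absurd hπ.symm (by simp)

lemma v_zpow_pi (hπ : V.v π = ((1 : ℤ) : WithTop ℤ)) (s : ℤ) :
    V.v (π ^ s) = (s : WithTop ℤ) := by
  have hπ0 := pi_ne_zero V hπ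
  induction s using Int.induction_on with
  | zero => simpa using v_one' V
  | succ n ih =>
      rw [zpow_add_one₀ hπ0, V.v_mul, ih, hπ]
      push_cast
      rfl
  | pred n ih =>
      rw [sub_eq_add_neg, zpow_add₀ hπ0, V.v_mul, ih]
      have h1 : V.v (π ^ (-1 : ℤ)) = ((-1 : ℤ) : WithTop ℤ) := by
        rw [zpow_neg_one]
        have h2 := v_inv' V hπ0
        rw [hπ] at h2
        obtain ⟨a, ha⟩ := exists_int_v V (inv_ne_zero hπ0)
        rw [ha] at h2 ⊢
        have : (1 : ℤ) + a = 0 := by exact_mod_cast h2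
        have : a = -1 := by omega
        exact_mod_cast congrArg (fun z : ℤ => ((z : WithTop ℤ))) this
      rw [h1]
      push_cast
      rfl

lemma mem_Kshift_iff {x : K} : x ∈ V.Kshift π k ↔ x ≠ 0 ∧ ∀ s : ℤ,
    V.v x = (s : WithTop ℤ) → ((k : ℤ) : WithTop ℤ) ≤ V.v (π ^ (-s) * x - 1) := by
  simp [PadicStructure.Kshift, PadicStructure.shift, Set.mem_setOf_eq]

lemma Kshift_one (hπ : V.v π = ((1 : ℤ) : WithTop ℤ)) : (1 : K) ∈ V.Kshift π k := by
  refine (mem_Kshift_iff V).mpr ⟨one_ne_zero, ?_⟩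
  intro s hs
  rw [v_one' V] at hs
  have : s = 0 := by exact_mod_cast hs.symm
  subst this
  simp only [neg_zero, zpow_zero, one_mul, sub_self, V.v_zero]
  exact le_top

lemma Kshift_mul (hk : 0 < k) (hπ : V.v π = ((1 : ℤ) : WithTop ℤ)) {x y : K}
    (hx : x ∈ V.Kshift π k) (hy : y ∈ V.Kshift π k) : x * y ∈ V.Kshift π k := by
  obtain ⟨hx0, hx1⟩ := (mem_Kshift_iff V).mp hx
  obtain ⟨hy0, hy1⟩ := (mem_Kshift_iff V).mp hy
  refine (mem_Kshift_iff V).mpr ⟨mul_ne_zero hx0 hy0, ?_⟩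
  intro s hs
  obtain ⟨a, ha⟩ := exists_int_v V hx0
  obtain ⟨b, hb⟩ := exists_int_v V hy0
  have hsab : s = a + b := by
    rw [V.v_mul, ha, hb] at hs
    exact_mod_cast hs.symm
  have heq : π ^ (-s) * (x * y) = (π ^ (-a) * x) * (π ^ (-b) * y) := by
    rw [hsab, neg_add, zpow_add₀ (pi_ne_zero V hπ)]
    ring
  rw [heq]
  exact unit_mul V hk (hx1 a ha) (hy1 b hb)

lemma Kshift_inv (hk : 0 < k) (hπ : V.v π = ((1 : ℤ) : WithTop ℤ)) {x : K}
    (hx : x ∈ V.Kshift π k) : x⁻¹ ∈ V.Kshift π k := by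
  obtain ⟨hx0, hx1⟩ := (mem_Kshift_iff V).mp hx
  refine (mem_Kshift_iff V).mpr ⟨inv_ne_zero hx0, ?_⟩
  intro s hs
  obtain ⟨a, ha⟩ := exists_int_v V hx0
  have hsa : s = -a := by
    have h2 := v_inv' V hx0
    rw [ha, hs] at h2
    have : a + s = 0 := by exact_mod_cast h2
    omega
  have heq : π ^ (-s) * x⁻¹ = (π ^ (-a) * x)⁻¹ := by
    rw [mul_inv, ← zpow_neg, hsa, neg_neg]
  rw [heq]
  exact unit_inv V hk (hx1 a ha)

lemma Kshift_div (hk : 0 < k) (hπ : V.v π = ((1 : ℤ) : WithTop ℤ)) {x y : K}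
    (hx : x ∈ V.Kshift π k) (hy : y ∈ V.Kshift π k) : x / y ∈ V.Kshift π k := by
  rw [div_eq_mul_inv]
  exact Kshift_mul V hk hπ hx (Kshift_inv V hk hπ hy)

lemma Kshift_zpow (hk : 0 < k) (hπ : V.v π = ((1 : ℤ) : WithTop ℤ)) {x : K}
    (hx : x ∈ V.Kshift π k) (n : ℤ) : x ^ n ∈ V.Kshift π k := by
  have hx0 : x ≠ 0 := ((mem_Kshift_iff V).mp hx).1
  induction n using Int.induction_on with
  | zero => simpa using Kshift_one V hπ
  | succ n ih => rw [zpow_add_one₀ hx0]; exact Kshift_mul V hk hπ ih hx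
  | pred n ih =>
      rw [sub_eq_add_neg, zpow_add₀ hx0, zpow_neg_one]
      exact Kshift_mul V hk hπ ih (Kshift_inv V hk hπ hx)

lemma Kshift_prod (hk : 0 < k) (hπ : V.v π = ((1 : ℤ) : WithTop ℤ)) {ι : Type*}
    (s : Finset ι) (f : ι → K) (hf : ∀ i ∈ s, f i ∈ V.Kshift π k) :
    (∏ i ∈ s, f i) ∈ V.Kshift π k := by
  classical
  induction s using Finset.induction_on with
  | empty => simpa using Kshift_one V hπ
  | insert _ _ hnotmem ih =>
      rw [Finset.prod_insert hnotmem]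
      exact Kshift_mul V hk hπ (hf _ (Finset.mem_insert_self _ _))
        (ih fun i hi => hf i (Finset.mem_insert_of_mem hi))

lemma mem_shiftR_iff {x : K} : x ∈ V.shift π V.R k ↔ x ∈ V.Kshift π k ∧ 0 ≤ V.v x := by
  simp only [PadicStructure.Kshift, PadicStructure.shift, PadicStructure.R,
    Set.mem_setOf_eq, Set.mem_univ, true_and]
  tauto

end Aux3
section Aux4
variable {p : ℕ} [Fact p.Prime] {K : Type*} [Field K] [Algebra ℚ_[p] K]
  [FiniteDimensional ℚ_[p] K] (V : PadicStructure p K)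

lemma v_div_eq {a b : K} (hb : b ≠ 0) {A B : ℤ} (hA : V.v a = (A : WithTop ℤ))
    (hB : V.v b = (B : WithTop ℤ)) : V.v (a / b) = ((A - B : ℤ) : WithTop ℤ) := by
  rw [div_eq_mul_inv, V.v_mul, hA]
  obtain ⟨C, hC⟩ := exists_int_v V (inv_ne_zero hb)
  have h2 := v_inv' V hb
  rw [hB, hC] at h2
  have hBC : B + C = 0 := by exact_mod_cast h2
  rw [hC]
  exact_mod_cast congrArg (fun z : ℤ => ((z : WithTop ℤ))) (by omega : A + C = A - B)

lemma main_aux (π : K) (hπ : V.v π = ((1 : ℤ) : WithTop ℤ))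
    (kb : ℕ) (hkb : 0 < kb) (β : K) (hβ : β ∈ V.Kshift π kb) {m : ℕ} (ν : Fin m → ℤ)
    (i0 iM : Fin m) (hne : iM ≠ i0) (F : Finset (Fin m)) (hi0F : i0 ∉ F) :
    Set.BijOn (fun x : Fin m → K =>
        Function.update x i0 (x i0 * x iM / (β * ∏ i ∈ F, x i ^ ν i)))
      {x : Fin m → K | (∀ i, x i ∈ V.shift π V.R kb) ∧
        V.v (β * ∏ i ∈ F, x i ^ ν i) ≤ V.v (x iM)}
      {x : Fin m → K | (∀ i, x i ∈ V.shift π V.R kb) ∧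
        V.v (β * ∏ i ∈ F, x i ^ ν i) ≤ V.v (x iM) ∧
        V.v (x iM) ≤ V.v (x i0 * (β * ∏ i ∈ F, x i ^ ν i))} := by
  classical
  set B : (Fin m → K) → K := fun x => β * ∏ i ∈ F, x i ^ ν i with hBdef
  have hBapp : ∀ z : Fin m → K, β * ∏ i ∈ F, z i ^ ν i = B z := fun _ => rfl
  have hβ0 : β ≠ 0 := ((mem_Kshift_iff V).mp hβ).1
  have hK : ∀ {x : Fin m → K}, (∀ i, x i ∈ V.shift π V.R kb) →
      ∀ i, x i ∈ V.Kshift π kb := fun h i => ((mem_shiftR_iff V).mp (h i)).1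
  have hx0 : ∀ {x : Fin m → K}, (∀ i, x i ∈ V.shift π V.R kb) → ∀ i, x i ≠ 0 :=
    fun h i => ((mem_Kshift_iff V).mp (hK h i)).1
  have hxv : ∀ {x : Fin m → K}, (∀ i, x i ∈ V.shift π V.R kb) →
      ∀ i, 0 ≤ V.v (x i) := fun h i => ((mem_shiftR_iff V).mp (h i)).2
  have hBK : ∀ {x : Fin m → K}, (∀ i, x i ∈ V.shift π V.R kb) →
      B x ∈ V.Kshift π kb := by
    intro x h
    exact Kshift_mul V hkb hπ hβ
      (Kshift_prod V hkb hπ F _ (fun i _ => Kshift_zpow V hkb hπ (hK h i) (ν i)))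
  have hB0 : ∀ {x : Fin m → K}, (∀ i, x i ∈ V.shift π V.R kb) → B x ≠ 0 :=
    fun h => ((mem_Kshift_iff V).mp (hBK h)).1
  have hBupd : ∀ (x : Fin m → K) (c : K), B (Function.update x i0 c) = B x := by
    intro x c
    simp only [hBdef]
    congr 1
    refine Finset.prod_congr rfl fun i hi => ?_
    rw [Function.update_of_ne (by rintro rfl; exact hi0F hi)]
  constructor
  · -- MapsTo
    intro x hx
    simp only [Set.mem_setOf_eq] at hx ⊢
    obtain ⟨h1, h2⟩ := hx
    rw [hBapp] at h2
    obtain ⟨A, hA⟩ := exists_int_v V (hx0 h1 i0)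
    obtain ⟨M, hM⟩ := exists_int_v V (hx0 h1 iM)
    obtain ⟨Bv, hBv⟩ := exists_int_v V (hB0 h1)
    have hBM : Bv ≤ M := by rw [hBv, hM] at h2; exact_mod_cast h2
    have hA0 : 0 ≤ A := by
      have := hxv h1 i0; rw [hA] at this; exact_mod_cast this
    have hcK : x i0 * x iM / B x ∈ V.Kshift π kb :=
      Kshift_div V hkb hπ (Kshift_mul V hkb hπ (hK h1 i0) (hK h1 iM)) (hBK h1)
    have hmulv : V.v (x i0 * x iM) = ((A + M : ℤ) : WithTop ℤ) := by
      rw [V.v_mul, hA, hM]; exact_mod_cast rfl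
    have hcv : V.v (x i0 * x iM / B x) = ((A + M - Bv : ℤ) : WithTop ℤ) :=
      v_div_eq V (hB0 h1) hmulv hBv
    refine ⟨?_, ?_, ?_⟩
    · intro i
      by_cases hi : i = i0
      · subst hi
        rw [Function.update_self, hBapp]
        refine (mem_shiftR_iff V).mpr ⟨hcK, ?_⟩
        rw [hcv]
        exact_mod_cast (by omega : (0 : ℤ) ≤ A + M - Bv)
      · rw [Function.update_of_ne hi]; exact h1 i
    · rw [hBapp, hBupd, Function.update_of_ne hne]; exact h2
    · simp only [hBapp]
      rw [hBupd, Function.update_of_ne hne, Function.update_self, V.v_mul, hcv, hBv, hM]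
      exact_mod_cast (by omega : M ≤ (A + M - Bv) + Bv)
  constructor
  · -- InjOn
    intro x hx y hy hxy
    simp only [Set.mem_setOf_eq] at hx hy
    obtain ⟨h1x, _⟩ := hx
    obtain ⟨h1y, _⟩ := hy
    simp only at hxy
    have hcoords : ∀ i, i ≠ i0 → x i = y i := by
      intro i hi
      have := congrFun hxy i
      simpa [Function.update_of_ne hi] using this
    have hBxy : B x = B y := by
      simp only [hBdef]
      congr 1
      exact Finset.prod_congr rfl fun i hi => by rw [hcoords i (by rintro rfl; exact hi0F hi)]
    have hMxy : x iM = y iM := hcoords iM hne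
    have h0 : x i0 = y i0 := by
      have h := congrFun hxy i0
      simp only [Function.update_self] at h
      rw [hBapp x, hBapp y, hBxy, hMxy, div_eq_div_iff (hB0 h1y) (hB0 h1y)] at h
      exact mul_right_cancel₀ (hx0 h1y iM)
        (mul_right_cancel₀ (hB0 h1y) h)
    funext i
    by_cases hi : i = i0
    · subst hi; exact h0
    · exact hcoords i hi
  · -- SurjOn
    intro y hy
    simp only [Set.mem_setOf_eq] at hy
    obtain ⟨h1, h2, h3⟩ := hy
    rw [hBapp] at h2 h3
    set c : K := y i0 * B y / y iM with hcdef
    set x : Fin m → K := Function.update y i0 c with hxdef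
    have hxc : ∀ i, i ≠ i0 → x i = y i := fun i hi => Function.update_of_ne hi _ _
    have hBx : B x = B y := hBupd y c
    have hMx : x iM = y iM := hxc iM hne
    obtain ⟨A, hA⟩ := exists_int_v V (hx0 h1 i0)
    obtain ⟨M, hM⟩ := exists_int_v V (hx0 h1 iM)
    obtain ⟨Bv, hBv⟩ := exists_int_v V (hB0 h1)
    have hBM : Bv ≤ M := by rw [hBv, hM] at h2; exact_mod_cast h2
    have hA0 : 0 ≤ A := by
      have := hxv h1 i0; rw [hA] at this; exact_mod_cast this
    have hMA : M ≤ A + Bv := by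
      rw [hM, V.v_mul, hA, hBv] at h3
      exact_mod_cast h3
    have hcK : c ∈ V.Kshift π kb :=
      Kshift_div V hkb hπ (Kshift_mul V hkb hπ (hK h1 i0) (hBK h1)) (hK h1 iM)
    have hmulv : V.v (y i0 * B y) = ((A + Bv : ℤ) : WithTop ℤ) := by
      rw [V.v_mul, hA, hBv]; exact_mod_cast rfl
    have hcv : V.v c = ((A + Bv - M : ℤ) : WithTop ℤ) := v_div_eq V (hx0 h1 iM) hmulv hM
    have hxmem : (∀ i, x i ∈ V.shift π V.R kb) ∧ V.v (B x) ≤ V.v (x iM) := by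
      refine ⟨?_, ?_⟩
      · intro i
        by_cases hi : i = i0
        · subst hi
          rw [hxdef, Function.update_self]
          refine (mem_shiftR_iff V).mpr ⟨hcK, ?_⟩
          rw [hcv]
          exact_mod_cast (by omega : (0 : ℤ) ≤ A + Bv - M)
        · rw [hxc i hi]; exact h1 i
      · rw [hBx, hMx]; exact h2
    refine ⟨x, ⟨hxmem.1, by rw [hBapp]; exact hxmem.2⟩, ?_⟩
    have hxi0 : x i0 = c := Function.update_self _ _ _
    simp only
    funext i
    by_cases hi : i = i0
    · subst hi
      rw [Function.update_self, hBapp, hxi0, hMx, hBx, hcdef]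
      field_simp [hB0 h1, hx0 h1 iM]
    · rw [Function.update_of_ne hi]
      exact hxc i hi
end Aux4
/-- The Presburger-style map `(x₁,…,x_m) ↦ (x₁ x_m / (β ∏ x_i^{ν_i}), x₂, …, x_m)`
is a bijection from `R^(k̄) × D` onto `E`. -/
theorem presburger_bijOn {p : ℕ} [Fact p.Prime] {K : Type*} [Field K] [Algebra ℚ_[p] K]
    [FiniteDimensional ℚ_[p] K] (V : PadicStructure p K)
    (π : K) (hπ : V.v π = ((1 : ℤ) : WithTop ℤ)) (m : ℕ) (hm : 1 < m)
    (kb : ℕ) (hkb : 0 < kb) (β : K) (hβ : β ∈ V.Kshift π kb) (ν : Fin m → ℤ) :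
    Set.BijOn
      (fun x : Fin m → K => Function.update x (⟨0, by omega⟩ : Fin m)
        (x ⟨0, by omega⟩ * x ⟨m - 1, by omega⟩ /
          (β * ∏ i ∈ Finset.univ.filter (fun i : Fin m => 0 < (i : ℕ) ∧ (i : ℕ) < m - 1),
            x i ^ ν i)))
      {x : Fin m → K | (∀ i, x i ∈ V.shift π V.R kb) ∧
        V.v (β * ∏ i ∈ Finset.univ.filter (fun i : Fin m => 0 < (i : ℕ) ∧ (i : ℕ) < m - 1),
            x i ^ ν i)
          ≤ V.v (x ⟨m - 1, by omega⟩)}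
      {x : Fin m → K | (∀ i, x i ∈ V.shift π V.R kb) ∧
        V.v (β * ∏ i ∈ Finset.univ.filter (fun i : Fin m => 0 < (i : ℕ) ∧ (i : ℕ) < m - 1),
            x i ^ ν i)
          ≤ V.v (x ⟨m - 1, by omega⟩) ∧
        V.v (x ⟨m - 1, by omega⟩)
          ≤ V.v (x ⟨0, by omega⟩ *
            (β * ∏ i ∈ Finset.univ.filter (fun i : Fin m => 0 < (i : ℕ) ∧ (i : ℕ) < m - 1),
              x i ^ ν i))} := by
  have hne : (⟨m - 1, by omega⟩ : Fin m) ≠ ⟨0, by omega⟩ := by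
    simp [Fin.ext_iff]; omega
  have hi0F : (⟨0, by omega⟩ : Fin m) ∉
      Finset.univ.filter (fun i : Fin m => 0 < (i : ℕ) ∧ (i : ℕ) < m - 1) := by
    simp
  exact main_aux V π hπ kb hkb β hβ ν _ _ hne _ hi0F
end
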